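/- Let P be an n×n real symmetric idempotent matrix (P = Pᵀ, P² = P), and set 𝐙 := I ⊗ I − (I − P) ⊗ (I − P), an n²×n² matrix. Then 𝐙 − P ⊗ I is positive semidefinite and (P ⊗ I + I ⊗ P) − 𝐙 is positive semidefinite; that is, P ⊗ I ⪯ 𝐙 ⪯ P ⊗ I + I ⊗ P in the Loewner order. -/

import Mathlib

open Matrix Kronecker

lemma sub_kron {n : ℕ} (A B C : Matrix (Fin n) (Fin n) ℝ) :
    (A - B) ⊗ₖ C = A ⊗ₖ C - B ⊗ₖ C := by
  ext ⟨i, i'⟩ ⟨j, j'⟩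
  simp [Matrix.kroneckerMap_apply, sub_mul]

lemma kron_sub {n : ℕ} (A B C : Matrix (Fin n) (Fin n) ℝ) :
    A ⊗ₖ (B - C) = A ⊗ₖ B - A ⊗ₖ C := by
  ext ⟨i, i'⟩ ⟨j, j'⟩
  simp [Matrix.kroneckerMap_apply, mul_sub]

lemma psd_kron_proj {n : ℕ} (A B : Matrix (Fin n) (Fin n) ℝ)
    (hAs : A.IsSymm) (hBs : B.IsSymm) (hA : A * A = A) (hB : B * B = B) :
    (A ⊗ₖ B).PosSemidef := by
  have hT : (A ⊗ₖ B)ᴴ = A ⊗ₖ B := by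
    have := Matrix.kroneckerMap_transpose (· * ·) A B
    rw [Matrix.IsSymm.eq hAs, Matrix.IsSymm.eq hBs] at this
    simpa [Matrix.conjTranspose_eq_transpose_of_trivial, kroneckerTMul] using this.symm
  have h : A ⊗ₖ B = (A ⊗ₖ B)ᴴ * (A ⊗ₖ B) := by
    rw [hT, ← Matrix.mul_kronecker_mul, hA, hB]
  rw [h]
  exact Matrix.posSemidef_conjTranspose_mul_self _

/-- For an n×n real symmetric idempotent matrix P and
𝐙 := I⊗I − (I−P)⊗(I−P), one has P⊗I ⪯ 𝐙 ⪯ P⊗I + I⊗P in the Loewner order. -/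
theorem bigZ_loewner_bounds {n : ℕ}
    (P : Matrix (Fin n) (Fin n) ℝ) (hPsym : P.IsSymm) (hPidem : P * P = P) :
    ((((1 : Matrix (Fin n × Fin n) (Fin n × Fin n) ℝ) - (1 - P) ⊗ₖ (1 - P))
        - P ⊗ₖ (1 : Matrix (Fin n) (Fin n) ℝ)).PosSemidef) ∧
    (((P ⊗ₖ (1 : Matrix (Fin n) (Fin n) ℝ) + (1 : Matrix (Fin n) (Fin n) ℝ) ⊗ₖ P)
        - ((1 : Matrix (Fin n × Fin n) (Fin n × Fin n) ℝ)
            - (1 - P) ⊗ₖ (1 - P))).PosSemidef) := by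
  have hQs : (1 - P).IsSymm := by
    unfold Matrix.IsSymm at *
    simp [transpose_sub, hPsym]
  have hQi : (1 - P) * (1 - P) = 1 - P := by
    rw [sub_mul, mul_sub, mul_sub, hPidem]; simp
  have hone : (1 : Matrix (Fin n × Fin n) (Fin n × Fin n) ℝ)
      = (1 : Matrix (Fin n) (Fin n) ℝ) ⊗ₖ (1 : Matrix (Fin n) (Fin n) ℝ) :=
    (Matrix.one_kronecker_one).symm
  constructor
  · have heq : ((1 : Matrix (Fin n × Fin n) (Fin n × Fin n) ℝ) - (1 - P) ⊗ₖ (1 - P))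
        - P ⊗ₖ (1 : Matrix (Fin n) (Fin n) ℝ) = (1 - P) ⊗ₖ P := by
      rw [hone]
      simp only [sub_kron, kron_sub]
      abel
    rw [heq]
    exact psd_kron_proj _ _ hQs hPsym hQi hPidem
  · have heq : (P ⊗ₖ (1 : Matrix (Fin n) (Fin n) ℝ) + (1 : Matrix (Fin n) (Fin n) ℝ) ⊗ₖ P)
        - ((1 : Matrix (Fin n × Fin n) (Fin n × Fin n) ℝ)
            - (1 - P) ⊗ₖ (1 - P)) = P ⊗ₖ P := by
      rw [hone]
      simp only [sub_kron, kron_sub]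
      abel
    rw [heq]
    exact psd_kron_proj _ _ hPsym hPsym hPidem hPidem
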